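/- Define H′ₙ := Σ_{l=1}^{n} ad_H^{l-1}([H′, ad_H^{n-l}(O)]) for matrices H, H′, O (where ad_H(X) = [H, X]). Then H′ₙ = Σ_{l=0}^{n-1} C(n, l+1) · ad_H^{n-l-1}([ad_{-H}^{l}(H′) , O]), i.e., H′ₙ = Σ_{l=0}^{n-1} (n! / ((l+1)!(n-l-1)!)) · ad_H^{n-l-1}([[[H′, H], …, H] (l times), O]). -/

import Mathlib

open Matrix NormedSpace ComplexOrder

noncomputable def opNorm {n : ℕ} (A : Matrix (Fin n) (Fin n) ℂ) : ℝ :=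
  ‖(Matrix.toEuclideanCLM (𝕜 := ℂ) A : EuclideanSpace ℂ (Fin n) →L[ℂ] EuclideanSpace ℂ (Fin n))‖

noncomputable def traceNorm {n : ℕ} (A : Matrix (Fin n) (Fin n) ℂ) : ℝ :=
  ((Matrix.posSemidef_conjTranspose_mul_self A).1.eigenvectorUnitary.1 *
    diagonal (((↑) : ℝ → ℂ) ∘ Real.sqrt ∘ (Matrix.posSemidef_conjTranspose_mul_self A).1.eigenvalues) *
    (star (Matrix.posSemidef_conjTranspose_mul_self A).1.eigenvectorUnitary : Matrix (Fin n) (Fin n) ℂ)).trace.re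

def IsDensity {n : ℕ} (ρ : Matrix (Fin n) (Fin n) ℂ) : Prop := ρ.PosSemidef ∧ ρ.trace = 1

/-- Left adjoint action: ad_H(X) = [H, X]. -/
noncomputable def adL {n : ℕ} (H : Matrix (Fin n) (Fin n) ℂ) : Matrix (Fin n) (Fin n) ℂ → Matrix (Fin n) (Fin n) ℂ :=
  fun X => H * X - X * H

/-- Right-nesting action: X ↦ [X, H]. -/
noncomputable def adR {n : ℕ} (H : Matrix (Fin n) (Fin n) ℂ) : Matrix (Fin n) (Fin n) ℂ → Matrix (Fin n) (Fin n) ℂ :=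
  fun X => X * H - H * X


namespace Stmt8Aux

variable {n : ℕ}

noncomputable def adE (H : Matrix (Fin n) (Fin n) ℂ) :
    Module.End ℂ (Matrix (Fin n) (Fin n) ℂ) :=
  LinearMap.mulLeft ℂ H - LinearMap.mulRight ℂ H

lemma adE_apply (H X : Matrix (Fin n) (Fin n) ℂ) : adE H X = H * X - X * H := rfl

lemma adL_iter (H : Matrix (Fin n) (Fin n) ℂ) (k : ℕ) (X : Matrix (Fin n) (Fin n) ℂ) :
    (adL H)^[k] X = (adE H ^ k) X := by
  induction k generalizing X with
  | zero => simp
  | succ k ih =>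
    rw [Function.iterate_succ_apply, ih, pow_succ, Module.End.mul_apply]
    rfl

lemma adR_iter (H : Matrix (Fin n) (Fin n) ℂ) (k : ℕ) (X : Matrix (Fin n) (Fin n) ℂ) :
    (adR H)^[k] X = ((-1 : ℂ) ^ k) • (adE H ^ k) X := by
  induction k generalizing X with
  | zero => simp
  | succ k ih =>
    rw [Function.iterate_succ_apply', ih]
    have : adR H (((-1 : ℂ) ^ k) • (adE H ^ k) X)
        = ((-1 : ℂ) ^ k) • (-(adE H ((adE H ^ k) X))) := by
      simp only [adR, adE_apply, Matrix.smul_mul, Matrix.mul_smul, ← smul_sub, ← smul_neg]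
      congr 1
      abel
    have h2 : (adE H ^ (k+1)) X = adE H ((adE H ^ k) X) := by
      rw [pow_succ', Module.End.mul_apply]
    rw [this, h2, smul_neg, ← neg_smul]
    congr 1
    ring

lemma shuffle {M : Type*} [AddCommGroup M] [Module ℂ M] (T : ℕ → M) (m : ℕ) :
    (∑ j ∈ Finset.range (m+1), ((-1:ℂ)^j * (m.choose j : ℂ)) • T j)
      - ∑ j ∈ Finset.range (m+1), ((-1:ℂ)^j * (m.choose j : ℂ)) • T (j+1)
    = ∑ j ∈ Finset.range (m+2), ((-1:ℂ)^j * ((m+1).choose j : ℂ)) • T j := by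
  have h1 : (∑ j ∈ Finset.range (m+1), ((-1:ℂ)^j * (m.choose j : ℂ)) • T j)
      = ∑ j ∈ Finset.range (m+2), ((-1:ℂ)^j * (m.choose j : ℂ)) • T j := by
    rw [Finset.sum_range_succ (n := m+1)]
    simp [Nat.choose_succ_self]
  have h2 : ∑ j ∈ Finset.range (m+2),
        (((-1:ℂ)^j * (m.choose j : ℂ)) - ((-1:ℂ)^j * (((m+1).choose j : ℕ) : ℂ))) • T j
      = ∑ j ∈ Finset.range (m+1), ((-1:ℂ)^j * (m.choose j : ℂ)) • T (j+1) := by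
    rw [Finset.sum_range_succ']
    have c0 : (((-1:ℂ)^0 * ((m.choose 0 : ℕ) : ℂ)) - ((-1:ℂ)^0 * (((m+1).choose 0 : ℕ) : ℂ))) = 0 := by
      simp
    rw [c0, zero_smul, add_zero]
    refine Finset.sum_congr rfl fun j _ => ?_
    congr 1
    rw [Nat.choose_succ_succ (m) (j)]
    push_cast
    ring
  rw [h1, ← h2, ← Finset.sum_sub_distrib]
  refine Finset.sum_congr rfl fun j _ => ?_
  rw [sub_smul]
  abel

lemma key (H X O' : Matrix (Fin n) (Fin n) ℂ) (m : ℕ) :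
    X * (adE H ^ m) O' - (adE H ^ m) O' * X
      = ∑ j ∈ Finset.range (m+1), ((-1:ℂ)^j * (m.choose j : ℂ)) •
          (adE H ^ (m-j)) ((adE H ^ j) X * O' - O' * (adE H ^ j) X) := by
  induction m generalizing O' with
  | zero => simp
  | succ m ih =>
    have h1 : (adE H ^ (m+1)) O' = (adE H ^ m) (adE H O') := by
      rw [pow_succ, Module.End.mul_apply]
    rw [h1, ih (adE H O')]
    have step : ∀ j ∈ Finset.range (m+1),
        ((-1:ℂ)^j * (m.choose j : ℂ)) •
          (adE H ^ (m-j)) ((adE H ^ j) X * adE H O' - adE H O' * (adE H ^ j) X)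
        = ((-1:ℂ)^j * (m.choose j : ℂ)) • (adE H ^ (m+1-j))
            ((adE H ^ j) X * O' - O' * (adE H ^ j) X)
          - ((-1:ℂ)^j * (m.choose j : ℂ)) • (adE H ^ (m+1-(j+1)))
            ((adE H ^ (j+1)) X * O' - O' * (adE H ^ (j+1)) X) := by
      intro j hj
      rw [Finset.mem_range] at hj
      have hj' : j ≤ m := by omega
      have hid : (adE H ^ j) X * adE H O' - adE H O' * (adE H ^ j) X
          = adE H ((adE H ^ j) X * O' - O' * (adE H ^ j) X)
            - ((adE H ((adE H ^ j) X)) * O' - O' * (adE H ((adE H ^ j) X))) := by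
        simp only [adE_apply]
        noncomm_ring
      rw [hid, map_sub, smul_sub]
      have e1 : m + 1 - (j + 1) = m - j := by omega
      rw [e1]
      congr 2
      · rw [← Module.End.mul_apply, ← pow_succ]
        congr 2
        omega
      · rw [← Module.End.mul_apply, ← pow_succ']
    rw [Finset.sum_congr rfl step, Finset.sum_sub_distrib]
    exact shuffle (fun k => (adE H ^ (m+1-k)) ((adE H ^ k) X * O' - O' * (adE H ^ k) X)) m

end Stmt8Aux

open Stmt8Aux
/-- H′ₙ = Σ_{l=1}^{N} ad_H^{l-1}([H′, ad_H^{N-l}(O)])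
            = Σ_{l=0}^{N-1} C(N, l+1)·ad_H^{N-l-1}([[[H′,H],…,H] (l times), O]). -/
theorem stmt8 {n : ℕ} (H H' O : Matrix (Fin n) (Fin n) ℂ) (N : ℕ) :
    ∑ l ∈ Finset.range N,
        (adL H)^[l] (H' * ((adL H)^[N - 1 - l] O) - ((adL H)^[N - 1 - l] O) * H')
      = ∑ l ∈ Finset.range N, (N.choose (l + 1) : ℂ) •
          (adL H)^[N - 1 - l]
            (((adR H)^[l] H') * O - O * ((adR H)^[l] H')) := by
  simp only [adL_iter, adR_iter]
  have hRHS : ∀ l ∈ Finset.range N, (N.choose (l + 1) : ℂ) •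
        (adE H ^ (N - 1 - l))
          ((((-1:ℂ)^l • (adE H ^ l) H')) * O - O * ((-1:ℂ)^l • (adE H ^ l) H'))
      = ((-1:ℂ)^l * (N.choose (l+1) : ℂ)) •
        (adE H ^ (N - 1 - l)) ((adE H ^ l) H' * O - O * (adE H ^ l) H') := by
    intro l _
    rw [Matrix.smul_mul, Matrix.mul_smul, ← smul_sub, LinearMap.map_smul, smul_smul, mul_comm]
  have hL : ∀ l ∈ Finset.range N,
      (adE H ^ l) (H' * (adE H ^ (N - 1 - l)) O - (adE H ^ (N - 1 - l)) O * H')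
      = ∑ j ∈ Finset.range (N - l), ((-1:ℂ)^j * ((N - 1 - l).choose j : ℂ)) •
          (adE H ^ (N - 1 - j)) ((adE H ^ j) H' * O - O * (adE H ^ j) H') := by
    intro l hl
    rw [Finset.mem_range] at hl
    rw [key, map_sum, show N - 1 - l + 1 = N - l from by omega]
    refine Finset.sum_congr rfl fun j hj => ?_
    rw [Finset.mem_range] at hj
    rw [LinearMap.map_smul, ← Module.End.mul_apply, ← pow_add]
    congr 3
    omega
  rw [Finset.sum_congr rfl hL, Finset.sum_congr rfl hRHS]
  rw [Finset.sum_comm' (t' := Finset.range N) (s' := fun j => Finset.range (N - j))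
    (fun l j => by simp only [Finset.mem_range]; omega)]
  refine Finset.sum_congr rfl fun j hj => ?_
  rw [Finset.mem_range] at hj
  rw [← Finset.sum_smul]
  congr 1
  rw [← Finset.mul_sum]
  congr 1
  have natid : ∑ l ∈ Finset.range (N - j), (N - 1 - l).choose j = N.choose (j + 1) := by
    have h1 : ∀ l ∈ Finset.range (N - j),
        (N - 1 - l).choose j = ((N - j - 1 - l) + j).choose j := by
      intro l hl
      rw [Finset.mem_range] at hl
      congr 1
      omega
    rw [Finset.sum_congr rfl h1, Finset.sum_range_reflect (fun t => (t + j).choose j) (N - j),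
      show N - j = N - j - 1 + 1 from by omega, Nat.sum_range_add_choose]
    congr 1
    omega
  rw [← natid]
  push_cast
  rfl
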